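/- For every instance I in which all packets have length 1 or 2, every zealous optimal schedule Opt, every tie-breaking rule for Greedy, and every time t ≥ 0, Δ_1(t) = 0. -/
import Mathlib


/-!
# Packet forwarding on a line network

There are `k` active routers `1, …, k`; router `i` forwards packets to router `i+1`.
An instance is a finite collection of packets; packet `p` has a release time `rel p : ℕ`,
a start router `start p ∈ {1, …, k}` and a length `len p ≥ 1` with
`start p + len p − 1 ≤ k`; `p` must be forwarded by routers
`start p, start p + 1, …, start p + len p − 1` in this order.
-/

/-- An instance of online packet forwarding on a line network with `k` active routers.
Packets are indexed by `Fin n`. -/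
structure PInstance (k : ℕ) where
  n : ℕ
  rel : Fin n → ℕ
  start : Fin n → ℕ
  len : Fin n → ℕ

namespace PInstance

variable {k : ℕ}

/-- The instance is well-formed: start routers are at least `1`, lengths are at least `1`,
and every packet fits on the line: `start p + len p − 1 ≤ k`. -/
def Valid (I : PInstance k) : Prop :=
  ∀ p, 1 ≤ I.start p ∧ 1 ≤ I.len p ∧ I.start p + I.len p ≤ k + 1

/-- All packets of the instance have length `1` or `2`. -/
def Short (I : PInstance k) : Prop :=
  ∀ p, I.len p = 1 ∨ I.len p = 2

/-- A schedule assigns to each packet `p` and each hop index `j < len p` (corresponding to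
router `start p + j`) the time step at which that router forwards `p`.  Values at
hop indices `j ≥ len p` are irrelevant. -/
abbrev Sched (I : PInstance k) := Fin I.n → ℕ → ℕ

/-- `arr I S p j` is the time from which hop `j` of packet `p` is available:
packet `p` is available at its start router from time `rel p`, and a packet forwarded
at time `t` is available at the next router from time `t + 1`. -/
def arr (I : PInstance k) (S : Sched I) (p : Fin I.n) : ℕ → ℕ
  | 0 => I.rel p
  | j + 1 => S p j + 1

/-- Feasibility of a schedule: every hop is forwarded no earlier than the time from which
it is available (this includes releases and the order of the hops), and each router
forwards at most one packet in each time step. -/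
def Feasible (I : PInstance k) (S : Sched I) : Prop :=
  (∀ p j, j < I.len p → arr I S p j ≤ S p j) ∧
  (∀ p q jp jq, jp < I.len p → jq < I.len q →
    I.start p + jp = I.start q + jq → S p jp = S q jq → p = q)

/-- Completion time `C(p)`: one plus the time step in which the last router forwards `p`. -/
def comp (I : PInstance k) (S : Sched I) (p : Fin I.n) : ℕ :=
  S p (I.len p - 1) + 1

/-- Flow time of packet `p`: `C(p) − r(p)`. -/
def flowTime (I : PInstance k) (S : Sched I) (p : Fin I.n) : ℕ :=
  comp I S p - I.rel p

/-- Cost of a schedule: the maximum flow time over all packets of the instance. -/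
def cost (I : PInstance k) (S : Sched I) : ℕ :=
  Finset.univ.sup (flowTime I S)

/-- `Opt(I)`: the minimum cost over all feasible schedules. -/
noncomputable def opt (I : PInstance k) : ℕ :=
  sInf {c | ∃ S : Sched I, Feasible I S ∧ cost I S = c}

/-- Hop `j` of packet `p` is waiting (available but not yet forwarded) at time `t`. -/
def Waiting (I : PInstance k) (S : Sched I) (p : Fin I.n) (j t : ℕ) : Prop :=
  j < I.len p ∧ arr I S p j ≤ t ∧ t ≤ S p j

/-- Remaining length `ℓ(p,t)`: the number of routers that still need to forward `p`
at time `t` (under schedule `S`). -/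
noncomputable def remLen (I : PInstance k) (S : Sched I) (p : Fin I.n) (t : ℕ) : ℕ :=
  Set.ncard {j : ℕ | j < I.len p ∧ t ≤ S p j}

/-- Priority `π(p,t) = (t − r(p)) + ℓ(p,t)`. -/
noncomputable def prio (I : PInstance k) (S : Sched I) (p : Fin I.n) (t : ℕ) : ℕ :=
  (t - I.rel p) + remLen I S p t

/-- A schedule is zealous if, at every time step and every router at which some packet
is available (waiting), it forwards a packet there. -/
def Zealous (I : PInstance k) (S : Sched I) : Prop :=
  ∀ t i, (∃ p j, Waiting I S p j t ∧ I.start p + j = i) →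
    ∃ q jq, Waiting I S q jq t ∧ I.start q + jq = i ∧ S q jq = t

/-- `S` is a schedule that Greedy (with some tie-breaking rule) produces: it is feasible,
and in every time step, every router at which at least one packet is waiting forwards a
waiting packet of maximum priority among the packets waiting there. -/
def IsGreedy (I : PInstance k) (S : Sched I) : Prop :=
  Feasible I S ∧
  ∀ t i, (∃ p j, Waiting I S p j t ∧ I.start p + j = i) →
    ∃ q jq, Waiting I S q jq t ∧ I.start q + jq = i ∧ S q jq = t ∧
      ∀ p j, Waiting I S p j t → I.start p + j = i → prio I S p t ≤ prio I S q t

/-- The number of packets released by time `t` that still need to be forwarded by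
router `i` at time `t` under schedule `S`. -/
noncomputable def needs (I : PInstance k) (S : Sched I) (i t : ℕ) : ℕ :=
  Set.ncard {p : Fin I.n | I.rel p ≤ t ∧ ∃ j, j < I.len p ∧ I.start p + j = i ∧ t ≤ S p j}

end PInstance

/-- `Δ_i(t) = g_i(t) − a_i(t)`, where `g_i(t)` counts the packets (released by time `t`)
that Greedy's schedule `Sg` still needs to forward on router `i` at time `t`, and
`a_i(t)` is the analogous quantity for the schedule `So` of `Opt`. -/
noncomputable def delta {k : ℕ} (I : PInstance k) (Sg So : PInstance.Sched I)
    (i t : ℕ) : ℤ :=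
  (I.needs Sg i t : ℤ) - (I.needs So i t : ℤ)

namespace PFAux

open PInstance

variable {k : ℕ}

/-- Packets still needing router 1 at time `t`. -/
def W (I : PInstance k) (S : PInstance.Sched I) (t : ℕ) : Set (Fin I.n) :=
  {p | I.start p = 1 ∧ I.rel p ≤ t ∧ t ≤ S p 0}

lemma needs_one_eq (I : PInstance k) (hV : I.Valid) (S : PInstance.Sched I) (t : ℕ) :
    I.needs S 1 t = (W I S t).ncard := by
  unfold PInstance.needs W
  congr 1
  ext p
  simp only [Set.mem_setOf_eq]
  constructor
  · rintro ⟨hr, j, hj, hsj, hts⟩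
    have h1 := (hV p).1
    have hj0 : j = 0 := by omega
    subst hj0
    exact ⟨by omega, hr, hts⟩
  · rintro ⟨hs, hr, hts⟩
    exact ⟨hr, 0, (hV p).2.1, by omega, hts⟩

lemma W_zero (I : PInstance k) (S : PInstance.Sched I) :
    W I S 0 = {p | I.start p = 1 ∧ I.rel p = 0} := by
  ext p
  simp [W, Nat.le_zero]

lemma W_succ (I : PInstance k) (hV : I.Valid) (S : PInstance.Sched I)
    (hF : I.Feasible S) (t : ℕ) :
    W I S (t + 1) =
      (W I S t \ {p | S p 0 = t}) ∪ {p | I.start p = 1 ∧ I.rel p = t + 1} := by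
  ext p
  simp only [W, Set.mem_union, Set.mem_diff, Set.mem_setOf_eq]
  constructor
  · rintro ⟨hs, hr, hts⟩
    rcases Nat.lt_or_ge (I.rel p) (t + 1) with h | h
    · exact Or.inl ⟨⟨hs, by omega, by omega⟩, by omega⟩
    · exact Or.inr ⟨hs, by omega⟩
  · rintro (⟨⟨hs, hr, hts⟩, hne⟩ | ⟨hs, hr⟩)
    · exact ⟨hs, by omega, by omega⟩
    · have h := hF.1 p 0 (hV p).2.1
      have harr : PInstance.arr I S p 0 = I.rel p := rfl
      rw [harr] at h
      exact ⟨hs, le_of_eq hr, by omega⟩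

lemma fwd_card (I : PInstance k) (hV : I.Valid) (S : PInstance.Sched I)
    (hF : I.Feasible S) (hZ : I.Zealous S) (t : ℕ) :
    (W I S t ∩ {p | S p 0 = t}).ncard = if (W I S t).ncard = 0 then 0 else 1 := by
  by_cases h : W I S t = ∅
  · rw [h]
    simp
  · obtain ⟨p, hp⟩ := Set.nonempty_iff_ne_empty.mpr h
    obtain ⟨hs, hr, hts⟩ := hp
    have hwait : I.Waiting S p 0 t := ⟨(hV p).2.1, hr, hts⟩
    obtain ⟨q, jq, hqw, hqi, hqt⟩ := hZ t 1 ⟨p, 0, hwait, by omega⟩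
    have hjq : jq = 0 := by have := (hV q).1; omega
    subst hjq
    have hsq : I.start q = 1 := by omega
    have harrq : PInstance.arr I S q 0 = I.rel q := rfl
    have hqmem : q ∈ W I S t ∩ {p | S p 0 = t} := by
      refine ⟨⟨hsq, ?_, ?_⟩, hqt⟩
      · have := hqw.2.1; rwa [harrq] at this
      · omega
    have hset : W I S t ∩ {p | S p 0 = t} = {q} := by
      apply Set.eq_singleton_iff_unique_mem.mpr
      refine ⟨hqmem, ?_⟩
      rintro p' ⟨⟨hs', _, _⟩, ht'⟩
      simp only [Set.mem_setOf_eq] at ht'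
      exact hF.2 p' q 0 0 (hV p').2.1 (hV q).2.1 (by omega) (ht'.trans hqt.symm)
    rw [hset, Set.ncard_singleton]
    rw [if_neg]
    intro h0
    have := (Set.ncard_eq_zero (Set.toFinite _)).mp h0
    exact h this

lemma ncard_W_succ (I : PInstance k) (hV : I.Valid) (S : PInstance.Sched I)
    (hF : I.Feasible S) (hZ : I.Zealous S) (t : ℕ) :
    (W I S (t + 1)).ncard =
      (W I S t).ncard - (if (W I S t).ncard = 0 then 0 else 1)
        + {p : Fin I.n | I.start p = 1 ∧ I.rel p = t + 1}.ncard := by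
  rw [W_succ I hV S hF t]
  have hdisj : Disjoint (W I S t \ {p | S p 0 = t})
      {p : Fin I.n | I.start p = 1 ∧ I.rel p = t + 1} := by
    rw [Set.disjoint_left]
    rintro p ⟨⟨_, hr, _⟩, _⟩ ⟨_, hr'⟩
    omega
  rw [Set.ncard_union_eq hdisj (Set.toFinite _) (Set.toFinite _)]
  congr 1
  have hdd : W I S t \ {p | S p 0 = t} = W I S t \ (W I S t ∩ {p | S p 0 = t}) := by
    ext p
    simp only [Set.mem_diff, Set.mem_inter_iff, Set.mem_setOf_eq]
    tauto
  rw [hdd, Set.ncard_diff Set.inter_subset_left (Set.toFinite _),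
    fwd_card I hV S hF hZ t]

lemma ncard_W_indep (I : PInstance k) (hV : I.Valid)
    (S1 S2 : PInstance.Sched I) (h1F : I.Feasible S1) (h1Z : I.Zealous S1)
    (h2F : I.Feasible S2) (h2Z : I.Zealous S2) (t : ℕ) :
    (W I S1 t).ncard = (W I S2 t).ncard := by
  induction t with
  | zero => rw [W_zero, W_zero]
  | succ t ih =>
      rw [ncard_W_succ I hV S1 h1F h1Z t, ncard_W_succ I hV S2 h2F h2Z t, ih]

end PFAux

/-- For every instance in which all packets have length `1` or `2`,
every zealous optimal schedule `So`, every tie-breaking rule for Greedy (i.e. every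
schedule `Sg` that Greedy can produce), and every time `t ≥ 0`, we have `Δ_1(t) = 0`. -/
theorem delta_one_eq_zero {k : ℕ} (I : PInstance k) (hV : I.Valid) (hS : I.Short)
    (So : PInstance.Sched I) (hOf : I.Feasible So) (hOz : I.Zealous So)
    (hOopt : I.cost So = I.opt)
    (Sg : PInstance.Sched I) (hG : I.IsGreedy Sg) (t : ℕ) :
    delta I Sg So 1 t = 0 := by
  have hGz : I.Zealous Sg := by
    intro s i h
    obtain ⟨q, jq, hw, hi, hst, _⟩ := hG.2 s i h
    exact ⟨q, jq, hw, hi, hst⟩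
  have h := PFAux.ncard_W_indep I hV Sg So hG.1 hGz hOf hOz t
  unfold delta
  rw [PFAux.needs_one_eq I hV Sg t, PFAux.needs_one_eq I hV So t, h]
  omega
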